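/- Fix g > 0 and α > 0, and define the mean-field Atlas growth rate function γ_α(u) := g·(α+1)·(1−u)^α on [0,1]. Then ∫₀¹ γ_α(v) dv = g, the function Γ_α(u) := ∫₀^u γ_α(v) dv satisfies Γ_α(u) − g·u = g·(1−u)·(1 − (1−u)^α) > 0 for all u ∈ (0,1) (condition (E1)), and condition (E2) holds: ∫₀^{1/2} u/(Γ_α(u) − g·u) du + ∫_{1/2}^1 (1−u)/(Γ_α(u) − g·u) du < +∞. -/

import Mathlib

open MeasureTheory Set Filter Topology

/-- `Γ(u) = ∫₀^u γ(v) dv`. -/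
noncomputable def Gam (γ : ℝ → ℝ) (u : ℝ) : ℝ := ∫ v in (0:ℝ)..u, γ v

/-- market mean growth rate `g = ∫₀¹ γ(v) dv`. -/
noncomputable def mg (γ : ℝ → ℝ) : ℝ := ∫ v in (0:ℝ)..1, γ v

/-- `Ψ(u) = ∫_{1/2}^u σ²(v) / (2 (Γ(v) - g v)) dv`. -/
noncomputable def Psi (γ σ2 : ℝ → ℝ) (u : ℝ) : ℝ :=
  ∫ v in (1/2:ℝ)..u, σ2 v / (2 * (Gam γ v - mg γ * v))

/-- critical diversity index `p_c = 2 (g - γ(1)) / σ²(1)`. -/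
noncomputable def pcrit (γ σ2 : ℝ → ℝ) : ℝ := 2 * (mg γ - γ 1) / σ2 1

/-- critical index `q_c = 2 (γ(0) - g) / σ²(0)`. -/
noncomputable def qcrit (γ σ2 : ℝ → ℝ) : ℝ := 2 * (γ 0 - mg γ) / σ2 0

lemma gam_eq (g α : ℝ) (hα : 0 < α) (u : ℝ) :
    Gam (fun u => g * (α + 1) * (1 - u) ^ α) u = g * (1 - (1 - u) ^ (α + 1)) := by
  have hcont : Continuous (fun v : ℝ => g * (α + 1) * (1 - v) ^ α) :=
    continuous_const.mul ((Real.continuous_rpow_const hα.le).comp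
      (continuous_const.sub continuous_id))
  have hderiv : ∀ x : ℝ, HasDerivAt (fun y => g * (1 - (1 - y) ^ (α + 1)))
      (g * (α + 1) * (1 - x) ^ α) x := by
    intro x
    have h1 : HasDerivAt (fun y : ℝ => 1 - y) (-1) x := (hasDerivAt_id x).const_sub 1
    have h2 : HasDerivAt (fun z : ℝ => z ^ (α + 1))
        ((α + 1) * (1 - x) ^ (α + 1 - 1)) (1 - x) :=
      Real.hasDerivAt_rpow_const (Or.inr (by linarith))
    rw [show α + 1 - 1 = α by ring] at h2
    have h3 : HasDerivAt (fun y : ℝ => (1 - y) ^ (α + 1))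
        ((α + 1) * (1 - x) ^ α * -1) x := by
      have := h2.comp x h1
      exact this
    have h4 := (h3.const_mul g).const_sub g
    have heq : (fun y : ℝ => g - g * (1 - y) ^ (α + 1))
        = fun y => g * (1 - (1 - y) ^ (α + 1)) := by funext y; ring
    rw [heq] at h4
    rw [show g * (α + 1) * (1 - x) ^ α = -(g * ((α + 1) * (1 - x) ^ α * -1)) by ring]
    exact h4
  unfold Gam
  rw [intervalIntegral.integral_eq_sub_of_hasDerivAt (fun x _ => hderiv x)
    (hcont.intervalIntegrable 0 u)]
  simp [Real.one_rpow]

lemma diff_eq (g α : ℝ) (hα : 0 < α) (u : ℝ) (hu : u ≤ 1) :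
    Gam (fun u => g * (α + 1) * (1 - u) ^ α) u - g * u
      = g * (1 - u) * (1 - (1 - u) ^ α) := by
  rw [gam_eq g α hα u]
  have h1u : (0:ℝ) ≤ 1 - u := by linarith
  rcases eq_or_lt_of_le h1u with h | h
  · rw [← h]
    rw [Real.zero_rpow (by linarith), Real.zero_rpow hα.ne']
    have : u = 1 := by linarith
    subst this; ring
  · rw [Real.rpow_add_one h.ne']
    ring

lemma one_sub_rpow_lb (α : ℝ) (hα : 0 < α) (u : ℝ) (hu0 : 0 ≤ u) (hu1 : u ≤ 1) :
    min α 1 * u ≤ 1 - (1 - u) ^ α := by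
  rcases le_or_gt α 1 with h | h
  · have hb := rpow_one_add_le_one_add_mul_self (s := -u) (by linarith) hα.le h
    rw [show (1:ℝ) + -u = 1 - u by ring] at hb
    rw [min_eq_left h]
    nlinarith
  · have hb : (1 - u) ^ α ≤ (1 - u) ^ (1:ℝ) := by
      rcases eq_or_lt_of_le hu1 with rfl | hu1'
      · simp [Real.zero_rpow hα.ne']
      · exact Real.rpow_le_rpow_of_exponent_ge (by linarith) (by linarith) h.le
    rw [Real.rpow_one] at hb
    rw [min_eq_right h.le]; linarith

/-- for g > 0 and α > 0, the mean-field Atlas growth rate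
γ_α(u) = g (α+1) (1-u)^α has mean g, satisfies Γ_α(u) - g u = g (1-u)(1-(1-u)^α) > 0
on (0,1) (condition (E1)), and condition (E2) holds. -/
theorem stmt18 (g α : ℝ) (hg : 0 < g) (hα : 0 < α) :
    mg (fun u => g * (α + 1) * (1 - u) ^ α) = g ∧
    (∀ u ∈ Set.Ioo (0:ℝ) 1,
      Gam (fun u => g * (α + 1) * (1 - u) ^ α) u - g * u =
          g * (1 - u) * (1 - (1 - u) ^ α) ∧
        0 < Gam (fun u => g * (α + 1) * (1 - u) ^ α) u - g * u) ∧
    IntegrableOn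
      (fun u => u / (Gam (fun u => g * (α + 1) * (1 - u) ^ α) u - g * u))
      (Set.Ioo 0 (1/2)) ∧
    IntegrableOn
      (fun u => (1 - u) / (Gam (fun u => g * (α + 1) * (1 - u) ^ α) u - g * u))
      (Set.Ioo (1/2) 1) := by
  have hmeas : Measurable (fun u : ℝ =>
      Gam (fun u => g * (α + 1) * (1 - u) ^ α) u - g * u) := by
    have heq : (fun u : ℝ => Gam (fun u => g * (α + 1) * (1 - u) ^ α) u - g * u)
        = fun u => g * (1 - (1 - u) ^ (α + 1)) - g * u := by
      funext u; rw [gam_eq g α hα u]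
    rw [heq]
    have hc : Continuous (fun u : ℝ => g * (1 - (1 - u) ^ (α + 1)) - g * u) := by
      exact (continuous_const.mul (continuous_const.sub
        ((Real.continuous_rpow_const (by linarith)).comp
          (continuous_const.sub continuous_id)))).sub (continuous_const.mul continuous_id)
    exact hc.measurable
  have hpos : ∀ u ∈ Set.Ioo (0:ℝ) 1,
      0 < Gam (fun u => g * (α + 1) * (1 - u) ^ α) u - g * u := by
    intro u hu
    rw [diff_eq g α hα u hu.2.le]
    have h1 : (0:ℝ) < 1 - u := by linarith [hu.2]
    have h2 : (1 - u) ^ α < 1 := Real.rpow_lt_one h1.le (by linarith [hu.1]) hα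
    have h3 : 0 < 1 - (1 - u) ^ α := by linarith
    positivity
  refine ⟨?_, fun u hu => ⟨diff_eq g α hα u hu.2.le, hpos u hu⟩, ?_, ?_⟩
  · show Gam (fun u => g * (α + 1) * (1 - u) ^ α) 1 = g
    rw [gam_eq g α hα 1]
    simp [Real.zero_rpow (show α + 1 ≠ 0 by linarith)]
  · set c := min α 1 with hc
    have hcpos : 0 < c := lt_min hα one_pos
    apply Measure.integrableOn_of_bounded (M := 2 / (g * c))
    · simp [Real.volume_Ioo]
    · exact (measurable_id.div hmeas).aestronglyMeasurable
    · filter_upwards [ae_restrict_mem measurableSet_Ioo] with u hu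
      have hu0 : 0 < u := hu.1
      have hu2 : u < 1/2 := hu.2
      have hIoo : u ∈ Set.Ioo (0:ℝ) 1 := ⟨hu0, by linarith⟩
      have hd := diff_eq g α hα u (by linarith : u ≤ 1)
      have hlb : g * (1/2) * (c * u) ≤
          Gam (fun u => g * (α + 1) * (1 - u) ^ α) u - g * u := by
        rw [hd]
        have h1 : (1:ℝ)/2 ≤ 1 - u := by linarith
        have h2 : c * u ≤ 1 - (1 - u) ^ α :=
          one_sub_rpow_lb α hα u hu0.le (by linarith)
        have h2' : 0 ≤ c * u := by positivity
        have hm : (1/2) * (c * u) ≤ (1 - u) * (1 - (1 - u) ^ α) :=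
          mul_le_mul h1 h2 h2' (by linarith)
        nlinarith [mul_le_mul_of_nonneg_left hm hg.le]
      have hdpos := hpos u hIoo
      rw [Real.norm_eq_abs, abs_div, abs_of_pos hu0, abs_of_pos hdpos,
        div_le_div_iff₀ hdpos (by positivity)]
      nlinarith [hlb]
  · have hlt1 : ((1:ℝ)/2) ^ α < 1 := Real.rpow_lt_one (by norm_num) (by norm_num) hα
    apply Measure.integrableOn_of_bounded (M := 1 / (g * (1 - (1/2:ℝ) ^ α)))
    · simp [Real.volume_Ioo]
    · exact ((measurable_const.sub measurable_id).div hmeas).aestronglyMeasurable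
    · filter_upwards [ae_restrict_mem measurableSet_Ioo] with u hu
      have hu1 : u < 1 := hu.2
      have hu2 : 1/2 < u := hu.1
      have hIoo : u ∈ Set.Ioo (0:ℝ) 1 := ⟨by linarith, hu1⟩
      have hd := diff_eq g α hα u hu1.le
      have h1u : (0:ℝ) < 1 - u := by linarith
      have hru : (1 - u) ^ α < (1/2:ℝ) ^ α :=
        Real.rpow_lt_rpow (by linarith) (by linarith) hα
      have hlb : g * (1 - u) * (1 - (1/2:ℝ) ^ α) ≤
          Gam (fun u => g * (α + 1) * (1 - u) ^ α) u - g * u := by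
        rw [hd]
        nlinarith [mul_pos (mul_pos hg h1u) (sub_pos.mpr hru)]
      have hdpos := hpos u hIoo
      rw [Real.norm_eq_abs, abs_div, abs_of_pos h1u, abs_of_pos hdpos,
        div_le_div_iff₀ hdpos (mul_pos hg (by linarith : (0:ℝ) < 1 - (1/2:ℝ) ^ α))]
      nlinarith [hlb]
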